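/- Let A be an n×n totally positive matrix (all minors positive) and x ∈ R^n a nonzero vector. Then s^+(Ax) ≤ s^-(x), i.e., multiplication by A does not increase the number of sign variations. -/

import Mathlib

open Matrix Polynomial

/-- Number of sign changes in a list of reals (adjacent pairs with negative product). -/
noncomputable def countSignChanges (l : List ℝ) : ℕ :=
  ((l.zip l.tail).filter (fun p => decide (p.1 * p.2 < 0))).length

/-- `s⁻(z)`: number of sign changes after deleting all zero entries. -/
noncomputable def sMinus {n : ℕ} (z : Fin n → ℝ) : ℕ :=
  countSignChanges ((List.ofFn z).filter (fun x => decide (x ≠ 0)))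

/-- `y` is obtained from `z` by replacing every zero entry by `+1` or `-1`. -/
def IsCompletion {n : ℕ} (z y : Fin n → ℝ) : Prop :=
  ∀ i, (z i ≠ 0 ∧ y i = z i) ∨ (z i = 0 ∧ (y i = 1 ∨ y i = -1))

/-- `s⁺(z)`: maximal number of sign changes over all completions of `z`. -/
noncomputable def sPlus {n : ℕ} (z : Fin n → ℝ) : ℕ :=
  sSup { m | ∃ y : Fin n → ℝ, IsCompletion z y ∧ m = countSignChanges (List.ofFn y) }

/-- All minors of `A` are nonnegative. -/
def TotallyNonneg {n : ℕ} (A : Matrix (Fin n) (Fin n) ℝ) : Prop :=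
  ∀ (k : ℕ) (r c : Fin k → Fin n), StrictMono r → StrictMono c →
    0 ≤ (A.submatrix r c).det

/-- All minors of `A` are positive. -/
def TotallyPos {n : ℕ} (A : Matrix (Fin n) (Fin n) ℝ) : Prop :=
  ∀ (k : ℕ) (r c : Fin k → Fin n), StrictMono r → StrictMono c →
    0 < (A.submatrix r c).det

/-- `A` is oscillatory: totally nonnegative and some positive power is totally positive. -/
def Oscillatory {n : ℕ} (A : Matrix (Fin n) (Fin n) ℝ) : Prop :=
  TotallyNonneg A ∧ ∃ k : ℕ, 0 < k ∧ TotallyPos (A ^ k)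

/-- Irreducibility of a matrix. -/
def MatIrreducible {n : ℕ} (A : Matrix (Fin n) (Fin n) ℝ) : Prop :=
  ∀ S : Set (Fin n), S.Nonempty → S ≠ Set.univ → ∃ i ∈ S, ∃ j ∈ Sᶜ, A i j ≠ 0

/-- `A ∈ M⁺`: tridiagonal with positive super- and sub-diagonal entries. -/
def MemMplus {n : ℕ} (A : Matrix (Fin n) (Fin n) ℝ) : Prop :=
  (∀ i j : Fin n, ((i : ℕ) + 1 < (j : ℕ) ∨ (j : ℕ) + 1 < (i : ℕ)) → A i j = 0) ∧
  (∀ i j : Fin n, ((i : ℕ) + 1 = (j : ℕ) ∨ (j : ℕ) + 1 = (i : ℕ)) → 0 < A i j)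

lemma csc_nil : countSignChanges [] = 0 := rfl
lemma csc_single (a : ℝ) : countSignChanges [a] = 0 := rfl

lemma csc_cons2 (a b : ℝ) (l : List ℝ) :
    countSignChanges (a :: b :: l) = (if a*b < 0 then 1 else 0) + countSignChanges (b :: l) := by
  by_cases h : a * b < 0 <;> simp [countSignChanges, List.zip, List.filter, h, Nat.add_comm]

lemma csc_le_length (l : List ℝ) : countSignChanges l ≤ l.length := by
  refine le_trans (List.length_filter_le _ _) ?_
  rw [List.length_zip]; omega

lemma csc_snoc : ∀ (F : List ℝ) (b a : ℝ),
    countSignChanges (b :: (F ++ [a])) =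
      countSignChanges (b :: F) + (if (b :: F).getLast (by simp) * a < 0 then 1 else 0) := by
  intro F
  induction F with
  | nil =>
    intro b a
    simp only [List.nil_append, csc_cons2, csc_single, csc_nil, List.getLast_singleton]
    rw [add_zero, zero_add]
    rfl
  | cons c F ih =>
    intro b a
    have h1 : b :: ((c :: F) ++ [a]) = b :: c :: (F ++ [a]) := by simp
    rw [h1, csc_cons2, ih c a, csc_cons2]
    have hl : (b :: c :: F).getLast (by simp) = (c :: F).getLast (by simp) := by
      simp [List.getLast_cons]
    rw [hl]; ring

def Alt : ℝ → List ℝ → Prop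
  | _, [] => True
  | ε, a :: l => 0 < ε * a ∧ Alt (-ε) l

lemma alt_get : ∀ (l : List ℝ) (ε : ℝ), Alt ε l →
    ∀ (t : ℕ) (h : t < l.length), 0 < ε * (-1)^t * l.get ⟨t, h⟩ := by
  intro l
  induction l with
  | nil => intro ε _ t h; simp at h
  | cons a l ih =>
    intro ε hA t h
    obtain ⟨h1, h2⟩ := hA
    cases t with
    | zero => simpa using h1
    | succ t =>
      have := ih (-ε) h2 t (by simpa using h)
      simp only [List.get_cons_succ]
      have e : ε * (-1)^(t+1) = (-ε) * (-1)^t := by ring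
      rw [e]; exact this

lemma alt_take : ∀ (l : List ℝ) (ε : ℝ) (r : ℕ), Alt ε l → Alt ε (l.take r) := by
  intro l
  induction l with
  | nil => intro ε r _; rw [List.take_nil]; trivial
  | cons a l ih =>
    intro ε r hA
    cases r with
    | zero => exact trivial
    | succ r => exact ⟨hA.1, ih (-ε) r hA.2⟩

lemma exists_alt : ∀ (l : List ℝ) (a : ℝ), (∀ x ∈ a :: l, x ≠ 0) →
    ∃ (ε : ℝ) (m : List ℝ), (ε = 1 ∨ ε = -1) ∧ (a :: m).Sublist (a :: l) ∧ Alt ε (a :: m) ∧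
      (a :: m).length = countSignChanges (a :: l) + 1 := by
  intro l
  induction l with
  | nil =>
    intro a ha
    have ha' : a ≠ 0 := ha a (by simp)
    refine ⟨if 0 < a then 1 else -1, [], by split <;> simp, by simp, ⟨?_, trivial⟩, by simp [countSignChanges]⟩
    rcases lt_trichotomy a 0 with h|h|h
    · rw [if_neg (by linarith)]; nlinarith
    · exact absurd h ha'
    · rw [if_pos h]; nlinarith
  | cons b l ih =>
    intro a ha
    have hb : ∀ x ∈ b :: l, x ≠ 0 := fun x hx => ha x (by simp [hx])
    have ha' : a ≠ 0 := ha a (by simp)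
    have hb' : b ≠ 0 := hb b (by simp)
    obtain ⟨ε, m, hε, hsub, halt, hlen⟩ := ih b hb
    by_cases hab : a * b < 0
    · refine ⟨-ε, b :: m, by rcases hε with h|h <;> simp [h], hsub.cons₂ a, ⟨?_, by simpa using halt⟩, ?_⟩
      · have h1 : 0 < ε * b := halt.1
        rcases hε with h|h <;> subst h <;> nlinarith
      · rw [csc_cons2, if_pos hab]; simp at hlen ⊢; omega
    · have hab' : 0 < a * b := lt_of_le_of_ne (not_lt.mp hab) (by
        intro h; rcases mul_eq_zero.mp h.symm with h'|h' <;> [exact ha' h'; exact hb' h'])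
      have hm : m.Sublist l := List.cons_sublist_cons.mp hsub
      refine ⟨ε, m, hε, (hm.trans (List.sublist_cons_self b l)).cons₂ a, ⟨?_, halt.2⟩, ?_⟩
      · have h1 : 0 < ε * b := halt.1
        rcases hε with h|h <;> subst h <;> nlinarith
      · rw [csc_cons2, if_neg hab]; simp at hlen ⊢; omega

lemma csc_snoc' (F : List ℝ) (g : ℝ) (hg : F.getLast? = some g) (a : ℝ) :
    countSignChanges (F ++ [a]) = countSignChanges F + (if g * a < 0 then 1 else 0) := by
  have hF : F ≠ [] := by rintro rfl; simp at hg
  obtain ⟨b, F₀, rfl⟩ := List.exists_cons_of_ne_nil hF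
  have hgl : (b :: F₀).getLast (by simp) = g := by
    rw [List.getLast?_eq_getLast hF] at hg
    exact (Option.some_injective _ hg)
  rw [List.cons_append, csc_snoc F₀ b a, hgl]

lemma mem_of_getLast? {l : List ℝ} {a : ℝ} (h : l.getLast? = some a) : a ∈ l := by
  have hl : l ≠ [] := by rintro rfl; simp at h
  rw [List.getLast?_eq_getLast hl] at h
  rw [← Option.some_injective _ h]
  exact List.getLast_mem hl

/-- Sign-block decomposition of a list. -/
lemma blocks_exist : ∀ (l : List ℝ), (∃ a ∈ l, a ≠ 0) →
    ∃ (ε : ℝ) (B : ℕ → ℕ), (ε = 1 ∨ ε = -1) ∧ Monotone B ∧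
      (∀ t (h : t < l.length),
        B t ≤ countSignChanges (l.filter (fun x => decide (x ≠ 0)))
          ∧ 0 ≤ ε * (-1)^(B t) * l.get ⟨t, h⟩) ∧
      (∀ p, p ≤ countSignChanges (l.filter (fun x => decide (x ≠ 0))) →
          ∃ t, ∃ h : t < l.length, B t = p ∧ l.get ⟨t, h⟩ ≠ 0) ∧
      ∃ g : ℝ, (l.filter (fun x => decide (x ≠ 0))).getLast? = some g ∧
        0 < ε * (-1)^(countSignChanges (l.filter (fun x => decide (x ≠ 0)))) * g := by
  intro l
  induction l using List.reverseRecOn with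
  | nil => rintro ⟨a, ha, -⟩; simp at ha
  | append_singleton l a ih =>
    intro hex
    have hget1 : ∀ (t : ℕ) (h : t < l.length) (h' : t < (l ++ [a]).length),
        (l ++ [a]).get ⟨t, h'⟩ = l.get ⟨t, h⟩ := by
      intro t h h'
      simp only [List.get_eq_getElem]
      exact List.getElem_append_left h
    have hget2 : ∀ (h' : l.length < (l ++ [a]).length),
        (l ++ [a]).get ⟨l.length, h'⟩ = a := by
      intro h'
      simp only [List.get_eq_getElem]
      exact List.getElem_concat_length rfl _
    by_cases ha : a = 0
    · -- appended element is zero; filter unchanged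
      have hex' : ∃ b ∈ l, b ≠ 0 := by
        obtain ⟨b, hb, hb'⟩ := hex
        rcases List.mem_append.mp hb with h|h
        · exact ⟨b, h, hb'⟩
        · simp [ha] at h; exact absurd h hb'
      have hlnil : l ≠ [] := by rintro rfl; obtain ⟨b, hb, -⟩ := hex'; simp at hb
      have hlen : 0 < l.length := List.length_pos_iff.mpr hlnil
      obtain ⟨ε, B, hε, hmono, hsb, hrep, g, hg, hlast⟩ := ih hex'
      have hfe : (l ++ [a]).filter (fun x => decide (x ≠ 0)) =
          l.filter (fun x => decide (x ≠ 0)) := by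
        rw [List.filter_append]; simp [ha]
      refine ⟨ε, fun t => B (min t (l.length - 1)), hε, ?_, ?_, ?_, g, ?_, ?_⟩
      · exact fun s t hst => hmono (by omega)
      · intro t h
        dsimp only
        rw [hfe]
        simp only [List.length_append, List.length_singleton] at h
        rcases lt_or_ge t l.length with h'|h'
        · have hmin : min t (l.length - 1) = t := by omega
          rw [hmin, hget1 t h']
          exact hsb t h'
        · have ht : t = l.length := by omega
          subst ht
          rw [hget2, ha]
          have hmin : min l.length (l.length - 1) = l.length - 1 := by omega
          rw [hmin]
          exact ⟨(hsb (l.length - 1) (by omega)).1, by simp⟩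
      · intro p hp
        rw [hfe] at hp
        obtain ⟨t, h, hBt, hne⟩ := hrep p hp
        refine ⟨t, by simp; omega, ?_, ?_⟩
        · dsimp only
          have hmin : min t (l.length - 1) = t := by omega
          rw [hmin]; exact hBt
        · rw [hget1 t h]; exact hne
      · rw [hfe]; exact hg
      · rw [hfe]; exact hlast
    · -- appended element nonzero
      have hfe : (l ++ [a]).filter (fun x => decide (x ≠ 0)) =
          l.filter (fun x => decide (x ≠ 0)) ++ [a] := by
        rw [List.filter_append]; simp [ha]
      have hglast : ((l ++ [a]).filter (fun x => decide (x ≠ 0))).getLast? = some a := by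
        rw [hfe]; exact List.getLast?_concat
      by_cases hFnil : l.filter (fun x => decide (x ≠ 0)) = []
      · -- all entries of l are zero
        have hall : ∀ b ∈ l, b = 0 := by
          intro b hb
          have := List.filter_eq_nil_iff.mp hFnil b hb
          simpa using this
        have hK : countSignChanges ((l ++ [a]).filter (fun x => decide (x ≠ 0))) = 0 := by
          rw [hfe, hFnil]; rfl
        have hsgn : 0 < (if 0 < a then (1:ℝ) else -1) * a := by
          rcases lt_trichotomy a 0 with h''|h''|h''
          · rw [if_neg (by linarith)]; nlinarith
          · exact absurd h'' ha
          · rw [if_pos h'']; nlinarith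
        refine ⟨if 0 < a then 1 else -1, fun _ => 0, by split <;> simp, monotone_const,
          ?_, ?_, a, hglast, ?_⟩
        · intro t h
          dsimp only
          rw [hK, pow_zero, mul_one]
          refine ⟨le_refl 0, ?_⟩
          simp only [List.length_append, List.length_singleton] at h
          rcases lt_or_ge t l.length with h'|h'
          · rw [hget1 t h', hall _ (l.get_mem _)]; simp
          · have ht : t = l.length := by omega
            subst ht
            rw [hget2]
            exact le_of_lt hsgn
        · intro p hp
          rw [hK] at hp
          interval_cases p
          refine ⟨l.length, by simp, rfl, ?_⟩
          rw [hget2]; exact ha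
        · rw [hK, pow_zero, mul_one]; exact hsgn
      · -- l has nonzero entries: main case
        have hex' : ∃ b ∈ l, b ≠ 0 := by
          obtain ⟨b, L, hbl⟩ := List.exists_cons_of_ne_nil hFnil
          have hbmem : b ∈ l.filter (fun x => decide (x ≠ 0)) := by rw [hbl]; simp
          obtain ⟨hbm, hbne⟩ := List.mem_filter.mp hbmem
          exact ⟨b, hbm, by simpa using hbne⟩
        obtain ⟨ε, B, hε, hmono, hsb, hrep, g, hg, hlast⟩ := ih hex'
        set F := l.filter (fun x => decide (x ≠ 0)) with hFdef
        set K := countSignChanges F with hKdef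
        have hgne : g ≠ 0 := by
          have := List.mem_filter.mp (mem_of_getLast? hg)
          simpa using this.2
        have hK' : countSignChanges ((l ++ [a]).filter (fun x => decide (x ≠ 0)))
            = K + (if g * a < 0 then 1 else 0) := by
          rw [hfe]; exact csc_snoc' F g hg a
        have hpow : ((-1:ℝ))^K = 1 ∨ ((-1:ℝ))^K = -1 := by
          rcases Nat.even_or_odd K with h|h
          · exact Or.inl h.neg_one_pow
          · exact Or.inr h.neg_one_pow
        by_cases hga : g * a < 0
        · -- new sign change
          have hsgn : 0 < ε * (-1)^(K+1) * a := by
            rw [pow_succ]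
            rcases hpow with hp|hp <;> rcases hε with hε'|hε' <;>
              rw [hp, hε'] <;> rw [hp, hε'] at hlast <;> nlinarith [hga, hlast]
          refine ⟨ε, fun t => if t < l.length then B t else K + 1, hε, ?_, ?_, ?_,
            a, hglast, ?_⟩
          · intro s t hst
            dsimp only
            by_cases hs : s < l.length <;> by_cases ht : t < l.length
            · simp only [if_pos hs, if_pos ht]; exact hmono hst
            · simp only [if_pos hs, if_neg ht]
              exact le_trans (hsb s hs).1 (Nat.le_succ K)
            · omega
            · simp [hs, ht]
          · intro t h
            dsimp only
            rw [hK', if_pos hga]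
            simp only [List.length_append, List.length_singleton] at h
            rcases lt_or_ge t l.length with h'|h'
            · rw [if_pos h', hget1 t h']
              exact ⟨le_trans (hsb t h').1 (Nat.le_succ K), (hsb t h').2⟩
            · have ht : t = l.length := by omega
              subst ht
              rw [if_neg (by omega), hget2]
              exact ⟨le_refl _, le_of_lt hsgn⟩
          · intro p hp
            rw [hK', if_pos hga] at hp
            rcases Nat.lt_or_ge p (K+1) with hpK|hpK
            · obtain ⟨t, h, hBt, hne⟩ := hrep p (by omega)
              refine ⟨t, by simp; omega, ?_, ?_⟩
              · dsimp only; rw [if_pos h]; exact hBt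
              · rw [hget1 t h]; exact hne
            · have hpe : p = K + 1 := by omega
              refine ⟨l.length, by simp, ?_, ?_⟩
              · dsimp only; rw [if_neg (by omega), hpe]
              · rw [hget2]; exact ha
          · rw [hK', if_pos hga]; exact hsgn
        · -- no new sign change
          have hga' : 0 < g * a := by
            rcases (mul_ne_zero hgne ha).lt_or_gt with h|h
            · exact absurd h hga
            · exact h
          have hsgn : 0 < ε * (-1)^K * a := by
            rcases hpow with hp|hp <;> rcases hε with hε'|hε' <;>
              rw [hp, hε'] <;> rw [hp, hε'] at hlast <;> nlinarith [hga', hlast]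
          refine ⟨ε, fun t => if t < l.length then B t else K, hε, ?_, ?_, ?_,
            a, hglast, ?_⟩
          · intro s t hst
            dsimp only
            by_cases hs : s < l.length <;> by_cases ht : t < l.length
            · simp only [if_pos hs, if_pos ht]; exact hmono hst
            · simp only [if_pos hs, if_neg ht]; exact (hsb s hs).1
            · omega
            · simp [hs, ht]
          · intro t h
            dsimp only
            rw [hK', if_neg hga, Nat.add_zero]
            simp only [List.length_append, List.length_singleton] at h
            rcases lt_or_ge t l.length with h'|h'
            · rw [if_pos h', hget1 t h']
              exact hsb t h'
            · have ht : t = l.length := by omega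
              subst ht
              rw [if_neg (by omega), hget2]
              exact ⟨le_refl _, le_of_lt hsgn⟩
          · intro p hp
            rw [hK', if_neg hga, Nat.add_zero] at hp
            obtain ⟨t, h, hBt, hne⟩ := hrep p hp
            refine ⟨t, by simp; omega, ?_, ?_⟩
            · dsimp only; rw [if_pos h]; exact hBt
            · rw [hget1 t h]; exact hne
          · rw [hK', if_neg hga, Nat.add_zero]; exact hsgn

lemma det_pos_blocks {n m : ℕ} (A : Matrix (Fin n) (Fin n) ℝ) (hA : TotallyPos A)
    (r : Fin m → Fin n) (hr : StrictMono r) (S : Fin m → Finset (Fin n))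
    (hS : ∀ p, (S p).Nonempty) (c : Fin n → ℝ) (hc : ∀ p, ∀ j ∈ S p, 0 < c j)
    (hord : ∀ p q : Fin m, p < q → ∀ j ∈ S p, ∀ j' ∈ S q, j < j') :
    0 < Matrix.det (Matrix.of fun t p => ∑ j ∈ S p, c j * A (r t) j) := by
  classical
  set v : Fin n → (Fin m → ℝ) := fun j t => A (r t) j with hv
  set M : Matrix (Fin m) (Fin m) ℝ := Matrix.of fun t p => ∑ j ∈ S p, c j * A (r t) j with hM
  have h1 : M.det = Mᵀ.det := (Matrix.det_transpose _).symm
  have he : Mᵀ = fun p => ∑ j ∈ S p, c j • v j := by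
    ext p t
    simp [hM, hv, Finset.sum_apply]
  have h3 : Mᵀ.det = ∑ σ ∈ Fintype.piFinset S,
      Matrix.detRowAlternating.toMultilinearMap (fun p => c (σ p) • v (σ p)) := by
    rw [he]
    exact Matrix.detRowAlternating.toMultilinearMap.map_sum_finset (fun p j => c j • v j) S
  have h4 : ∀ σ : Fin m → Fin n,
      Matrix.detRowAlternating.toMultilinearMap (fun p => c (σ p) • v (σ p))
        = (∏ p, c (σ p)) * (A.submatrix r σ).det := by
    intro σ
    rw [Matrix.detRowAlternating.toMultilinearMap.map_smul_univ
      (fun p => c (σ p)) (fun p => v (σ p))]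
    rw [smul_eq_mul]
    congr 1
    have : Matrix.detRowAlternating.toMultilinearMap (fun p => v (σ p))
        = ((A.submatrix r σ)ᵀ).det := rfl
    rw [this, Matrix.det_transpose]
  rw [h1, h3]
  apply Finset.sum_pos
  · intro σ hσ
    have hσmem : ∀ p, σ p ∈ S p := fun p => (Fintype.mem_piFinset.mp hσ) p
    have hσmono : StrictMono σ := fun p q hpq =>
      hord p q hpq (σ p) (hσmem p) (σ q) (hσmem q)
    rw [h4 σ]
    exact mul_pos (Finset.prod_pos (fun p _ => hc p (σ p) (hσmem p))) (hA m r σ hr hσmono)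
  · exact Fintype.piFinset_nonempty.mpr hS

theorem stmt6 {n : ℕ} (A : Matrix (Fin n) (Fin n) ℝ) (hA : TotallyPos A)
    (x : Fin n → ℝ) (hx : x ≠ 0) :
    sPlus (A.mulVec x) ≤ sMinus x := by
  classical
  by_contra hcon
  push_neg at hcon
  set z := A.mulVec x with hzdef
  obtain ⟨k, hkdef⟩ : ∃ k, sMinus x = k := ⟨_, rfl⟩
  rw [hkdef] at hcon
  -- extract a maximizing completion y of z
  have hne : {m | ∃ y : Fin n → ℝ, IsCompletion z y ∧
      m = countSignChanges (List.ofFn y)}.Nonempty := by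
    refine ⟨countSignChanges (List.ofFn (fun i => if z i = 0 then 1 else z i)),
      fun i => if z i = 0 then 1 else z i, fun i => ?_, rfl⟩
    by_cases h : z i = 0
    · exact Or.inr ⟨h, Or.inl (by simp [h])⟩
    · exact Or.inl ⟨h, by simp [h]⟩
  have hbdd : BddAbove {m | ∃ y : Fin n → ℝ, IsCompletion z y ∧
      m = countSignChanges (List.ofFn y)} := by
    refine ⟨n, fun m hm => ?_⟩
    obtain ⟨y, -, rfl⟩ := hm
    exact (csc_le_length (List.ofFn y)).trans (by simp)
  obtain ⟨y, hy, hyc⟩ := Nat.sSup_mem hne hbdd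
  have hky : k + 1 ≤ countSignChanges (List.ofFn y) := by
    rw [← hyc]; exact hcon
  have hynz : ∀ a ∈ List.ofFn y, a ≠ 0 := by
    intro a hamem
    rw [List.mem_ofFn] at hamem
    obtain ⟨i, rfl⟩ := hamem
    rcases hy i with ⟨h1, h2⟩|⟨h1, h2|h2⟩ <;> rw [h2] <;> first | exact h1 | norm_num
  -- extract alternating indices I : Fin (k+2) → Fin n
  obtain ⟨ε, I, hε, hImono, hyalt⟩ :
      ∃ (ε : ℝ) (I : Fin (k+2) → Fin n), (ε = 1 ∨ ε = -1) ∧ StrictMono I ∧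
        ∀ t : Fin (k+2), 0 < ε * (-1)^(t:ℕ) * y (I t) := by
    cases hl : List.ofFn y with
    | nil => rw [hl, csc_nil] at hky; omega
    | cons b L =>
      obtain ⟨ε, m, hε, hsub, halt, hlen⟩ := exists_alt L b (hl ▸ hynz)
      set m' := (b :: m).take (k+2) with hm'
      have hm'len : m'.length = k + 2 := by
        rw [hm', List.length_take, hlen, ← hl]
        omega
      have hm'sub : m'.Sublist (List.ofFn y) := by
        rw [hl]
        exact (List.take_sublist _ _).trans hsub
      have hm'alt : Alt ε m' := alt_take _ _ _ halt
      obtain ⟨is, him, hpw⟩ := List.sublist_eq_map_getElem hm'sub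
      have hislen : is.length = k + 2 := by
        have := congrArg List.length him
        rw [hm'len] at this
        simpa using this.symm
      set J : Fin (k+2) → Fin (List.ofFn y).length :=
        fun t => is.get (Fin.cast hislen.symm t) with hJ
      refine ⟨ε, fun t => Fin.cast (List.length_ofFn (f := y)) (J t), hε, ?_, ?_⟩
      · intro a b hab
        have h := List.pairwise_iff_get.mp hpw (Fin.cast hislen.symm a)
          (Fin.cast hislen.symm b) hab
        exact h
      · intro t
        have hval : (t:ℕ) < m'.length := by rw [hm'len]; exact t.isLt
        have h1 : m'.get ⟨(t:ℕ), hval⟩ = (List.ofFn y).get (J t) := by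
          rw [List.get_eq_getElem, List.get_eq_getElem]
          rw [List.getElem_of_eq him hval, List.getElem_map]
          congr 1
        have h2 : (List.ofFn y).get (J t) = y (Fin.cast (List.length_ofFn (f := y)) (J t)) :=
          List.get_ofFn y (J t)
        have h3 := alt_get m' ε hm'alt (t:ℕ) hval
        rw [h1, h2] at h3
        exact h3
  have hzsign : ∀ t : Fin (k+2), 0 ≤ ε * (-1)^(t:ℕ) * z (I t) := by
    intro t
    rcases hy (I t) with ⟨h1, h2⟩|⟨h1, -⟩
    · rw [← h2]; exact le_of_lt (hyalt t)
    · rw [h1, mul_zero]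
  -- block decomposition of x
  have hxex : ∃ a ∈ List.ofFn x, a ≠ 0 := by
    obtain ⟨i, hi⟩ := Function.ne_iff.mp hx
    exact ⟨x i, (List.mem_ofFn).mpr ⟨i, rfl⟩, by simpa using hi⟩
  obtain ⟨ε', B, hε', hmono, hsb, hrep, -⟩ := blocks_exist (List.ofFn x) hxex
  have hkk : countSignChanges ((List.ofFn x).filter (fun x => decide (x ≠ 0))) = k := hkdef
  rw [hkk] at hsb hrep
  have hsb' : ∀ j : Fin n, B j.val ≤ k ∧ 0 ≤ ε' * (-1)^(B j.val) * x j := by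
    intro j
    have h := hsb j.val (by simpa using j.isLt)
    rwa [show (List.ofFn x).get ⟨j.val, by simpa using j.isLt⟩ = x j by
      rw [List.get_ofFn]; rfl] at h
  have hrep' : ∀ p, p ≤ k → ∃ j : Fin n, B j.val = p ∧ x j ≠ 0 := by
    intro p hp
    obtain ⟨t, h, hBt, hne⟩ := hrep p hp
    refine ⟨⟨t, by simpa using h⟩, hBt, ?_⟩
    rwa [show (List.ofFn x).get ⟨t, h⟩ = x ⟨t, by simpa using h⟩ by
      rw [List.get_ofFn]; rfl] at hne
  set S : Fin (k+1) → Finset (Fin n) :=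
    fun p => Finset.univ.filter (fun j => B j.val = p.val ∧ x j ≠ 0) with hSdef
  set c : Fin n → ℝ := fun j => ε' * (-1)^(B j.val) * x j with hcdef
  set w : Fin (k+1) → Fin n → ℝ := fun p i => ∑ j ∈ S p, c j * A i j with hwdef
  have hε'ne : ε' ≠ 0 := by rcases hε' with h|h <;> rw [h] <;> norm_num
  have hSne : ∀ p, (S p).Nonempty := by
    intro p
    obtain ⟨j, hj1, hj2⟩ := hrep' p.val (by omega)
    exact ⟨j, by simp [hSdef, hj1, hj2]⟩
  have hcpos : ∀ p, ∀ j ∈ S p, 0 < c j := by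
    intro p j hj
    simp only [hSdef, Finset.mem_filter] at hj
    refine lt_of_le_of_ne (hsb' j).2 ?_
    symm
    exact mul_ne_zero (mul_ne_zero hε'ne (pow_ne_zero _ (by norm_num))) hj.2.2
  have hord : ∀ p q : Fin (k+1), p < q → ∀ j ∈ S p, ∀ j' ∈ S q, j < j' := by
    intro p q hpq j hj j' hj'
    simp only [hSdef, Finset.mem_filter] at hj hj'
    by_contra hle
    push_neg at hle
    have : B j'.val ≤ B j.val := hmono (by exact_mod_cast hle)
    rw [hj.2.1, hj'.2.1] at this
    exact absurd (Fin.lt_def.mp hpq) (by omega)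
  have hε'2 : ε' * ε' = 1 := by rcases hε' with h|h <;> rw [h] <;> norm_num
  have hz_decomp : ∀ i, z i = ∑ p : Fin (k+1), (ε' * (-1)^(p:ℕ)) * w p i := by
    intro i
    have h1 : z i = ∑ j : Fin n, A i j * x j := by
      simp [hzdef, Matrix.mulVec, dotProduct]
    have h2 : ∀ p : Fin (k+1), (ε' * (-1)^(p:ℕ)) * w p i
        = ∑ j ∈ S p, A i j * x j := by
      intro p
      rw [hwdef]
      dsimp only
      rw [Finset.mul_sum]
      apply Finset.sum_congr rfl
      intro j hj
      simp only [hSdef, Finset.mem_filter] at hj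
      rw [hcdef]
      dsimp only
      rw [hj.2.1]
      have hpp : ((-1:ℝ))^(p:ℕ) * (-1)^(p:ℕ) = 1 := by
        rw [← pow_add]
        exact Even.neg_one_pow ⟨(p:ℕ), rfl⟩
      calc ε' * (-1)^(p:ℕ) * (ε' * (-1)^(p:ℕ) * x j * A i j)
          = (ε' * ε') * (((-1:ℝ))^(p:ℕ) * (-1)^(p:ℕ)) * (A i j * x j) := by ring
        _ = A i j * x j := by rw [hε'2, hpp]; ring
    rw [h1]
    rw [Finset.sum_congr rfl (fun p _ => h2 p)]
    -- now: ∑ j, A i j * x j = ∑ p, ∑ j ∈ S p, A i j * x j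
    have h3 : ∑ j : Fin n, A i j * x j
        = ∑ j ∈ Finset.univ.filter (fun j => x j ≠ 0), A i j * x j := by
      symm
      apply Finset.sum_filter_of_ne
      intro j _ hne hxj
      exact hne (by rw [hxj, mul_zero])
    rw [h3]
    have h4 := Finset.sum_fiberwise (Finset.univ.filter (fun j => x j ≠ 0))
      (fun j => (⟨B j.val, by have := (hsb' j).1; omega⟩ : Fin (k+1)))
      (fun j => A i j * x j)
    rw [← h4]
    apply Finset.sum_congr rfl
    intro p _
    apply Finset.sum_congr
    · ext j
      simp only [hSdef, Finset.mem_filter, Finset.mem_univ, true_and, Fin.ext_iff]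
      tauto
    · intro j _; rfl
  -- the (k+2)×(k+2) singular matrix
  set M : Matrix (Fin (k+2)) (Fin (k+2)) ℝ :=
    Matrix.of (fun t => Fin.cons (z (I t)) (fun p => w p (I t))) with hMdef
  have hM0 : ∀ t, M t 0 = z (I t) := by
    intro t
    show (Fin.cons (z (I t)) (fun p => w p (I t)) : Fin (k+2) → ℝ) 0 = z (I t)
    rw [Fin.cons_zero]
  have hMs : ∀ t (p : Fin (k+1)), M t p.succ = w p (I t) := by
    intro t p
    show (Fin.cons (z (I t)) (fun p => w p (I t)) : Fin (k+2) → ℝ) p.succ = w p (I t)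
    rw [Fin.cons_succ]
  have hdet0 : M.det = 0 := by
    by_contra hMne
    have hmv : M.mulVec (Fin.cons (-1 : ℝ) (fun p => ε' * (-1)^(p:ℕ)) : Fin (k+2) → ℝ) = 0 := by
      funext t
      have hst : M.mulVec (Fin.cons (-1 : ℝ) (fun p => ε' * (-1)^(p:ℕ)) : Fin (k+2) → ℝ) t
          = ∑ q, M t q * (Fin.cons (-1 : ℝ) (fun p => ε' * (-1)^(p:ℕ)) : Fin (k+2) → ℝ) q := by
        simp [Matrix.mulVec, dotProduct]
      rw [hst, Fin.sum_univ_succ]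
      simp only [Fin.cons_zero, Fin.cons_succ]
      have he2 : ∀ p : Fin (k+1), M t p.succ * (ε' * (-1)^(p:ℕ))
          = (ε' * (-1)^(p:ℕ)) * w p (I t) := by
        intro p
        rw [hMs]; ring
      rw [Finset.sum_congr rfl (fun p _ => he2 p), ← hz_decomp (I t), hM0]
      show z (I t) * -1 + z (I t) = (0 : Fin (k+2) → ℝ) t
      simp only [Pi.zero_apply]
      ring
    have := Matrix.eq_zero_of_mulVec_eq_zero hMne hmv
    have h0 := congrFun this 0
    rw [Fin.cons_zero] at h0
    norm_num at h0
  have hminor : ∀ t : Fin (k+2), 0 < (M.submatrix t.succAbove Fin.succ).det := by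
    intro t
    have hEq : M.submatrix t.succAbove Fin.succ =
        Matrix.of (fun s p => ∑ j ∈ S p, c j * A ((fun s => I (t.succAbove s)) s) j) := by
      ext s p
      show M (t.succAbove s) p.succ = _
      rw [hMs]
      rfl
    rw [hEq]
    exact det_pos_blocks A hA _ (hImono.comp (Fin.strictMono_succAbove t)) S hSne c hcpos hord
  have hexp := Matrix.det_succ_column_zero M
  rw [hdet0] at hexp
  have hzero : ∀ t : Fin (k+2), z (I t) = 0 := by
    have hnn : ∀ t : Fin (k+2), (0:ℝ) ≤
        ε * ((-1)^(t:ℕ) * M t 0 * (M.submatrix t.succAbove Fin.succ).det) := by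
      intro t
      rw [hM0]
      have h1 := hzsign t
      have h2 := le_of_lt (hminor t)
      calc (0:ℝ) = (ε * (-1)^(t:ℕ) * z (I t)) * 0 := by ring
      _ ≤ (ε * (-1)^(t:ℕ) * z (I t)) * (M.submatrix t.succAbove Fin.succ).det :=
          mul_le_mul_of_nonneg_left h2 h1
      _ = ε * ((-1)^(t:ℕ) * z (I t) * (M.submatrix t.succAbove Fin.succ).det) := by ring
    have hsum0 : ∑ t : Fin (k+2),
        ε * ((-1)^(t:ℕ) * M t 0 * (M.submatrix t.succAbove Fin.succ).det) = 0 := by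
      rw [← Finset.mul_sum, ← hexp, mul_zero]
    have heach := (Finset.sum_eq_zero_iff_of_nonneg (fun t _ => hnn t)).mp hsum0
    intro t
    have h := heach t (Finset.mem_univ t)
    rw [hM0] at h
    by_contra hzne
    have hεne : ε ≠ 0 := by rcases hε with h'|h' <;> rw [h'] <;> norm_num
    exact (mul_ne_zero hεne (mul_ne_zero (mul_ne_zero (pow_ne_zero _ (by norm_num)) hzne)
      (ne_of_gt (hminor t)))) h
  -- final contradiction via the (k+1)×(k+1) block matrix
  have hWpos := det_pos_blocks A hA (fun s : Fin (k+1) => I s.castSucc)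
    (hImono.comp Fin.strictMono_castSucc) S hSne c hcpos hord
  set W : Matrix (Fin (k+1)) (Fin (k+1)) ℝ :=
    Matrix.of (fun t p => ∑ j ∈ S p, c j * A (I t.castSucc) j) with hWdef
  have hWmv : W.mulVec (fun p => ε' * (-1)^(p:ℕ)) = 0 := by
    funext t
    have hst : W.mulVec (fun p => ε' * (-1)^(p:ℕ)) t
        = ∑ p, W t p * (ε' * (-1)^(p:ℕ)) := by
      simp [Matrix.mulVec, dotProduct]
    rw [hst]
    have : ∀ p : Fin (k+1), W t p * (ε' * (-1)^(p:ℕ))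
        = (ε' * (-1)^(p:ℕ)) * w p (I t.castSucc) := by
      intro p
      have hW : W t p = w p (I t.castSucc) := rfl
      rw [hW]; ring
    rw [Finset.sum_congr rfl (fun p _ => this p), ← hz_decomp (I t.castSucc)]
    show z (I t.castSucc) = 0
    exact hzero t.castSucc
  have := Matrix.eq_zero_of_mulVec_eq_zero (ne_of_gt hWpos) hWmv
  have h0 := congrFun this 0
  simp at h0
  exact hε'ne h0
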